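/- Let X and Y be topological vector spaces, T : X → Y × K a continuous linear operator with dense range, and H a closed hyperplane of X. Then there exists a continuous linear operator S : H → Y with dense range. -/

import Mathlib

/-- If T : X → Y × K is a continuous linear operator with dense range and H is
a closed hyperplane of X, then there is a continuous linear operator S : H → Y
with dense range. -/
theorem stmt_9 {𝕜 : Type*} [RCLike 𝕜] {X Y : Type*}
    [AddCommGroup X] [Module 𝕜 X] [TopologicalSpace X] [IsTopologicalAddGroup X]
    [ContinuousSMul 𝕜 X]
    [AddCommGroup Y] [Module 𝕜 Y] [TopologicalSpace Y] [IsTopologicalAddGroup Y]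
    [ContinuousSMul 𝕜 Y]
    (T : X →L[𝕜] (Y × 𝕜)) (hT : DenseRange T)
    (f : X →ₗ[𝕜] 𝕜) (hf : f ≠ 0) (hH : IsClosed ((LinearMap.ker f : Submodule 𝕜 X) : Set X)) :
    ∃ S : (LinearMap.ker f) →L[𝕜] Y, DenseRange S := by
  classical
  set g : X →L[𝕜] 𝕜 := (ContinuousLinearMap.snd 𝕜 Y 𝕜).comp T with hgdef
  have hgx : ∀ x, g x = (T x).2 := fun x => rfl
  -- g is nonzero: otherwise range T lies in the closed proper set Y × {0}
  have hgne : ∃ b, g b ≠ 0 := by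
    by_contra h
    push_neg at h
    have hc : closure (Set.range T) ⊆ {p : Y × 𝕜 | p.2 = 0} := by
      apply closure_minimal
      · rintro _ ⟨x, rfl⟩
        exact h x
      · exact isClosed_eq continuous_snd continuous_const
    have := hc (hT ((0 : Y), (1 : 𝕜)))
    simp at this
  obtain ⟨b, hb⟩ := hgne
  obtain ⟨a, ha⟩ : ∃ a, f a ≠ 0 := by
    by_contra h
    push_neg at h
    exact hf (LinearMap.ext fun x => h x)
  -- a vector outside both hyperplanes
  obtain ⟨w, hfw, hgw⟩ : ∃ w, f w ≠ 0 ∧ g w ≠ 0 := by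
    by_cases h1 : g a ≠ 0
    · exact ⟨a, ha, h1⟩
    push_neg at h1
    by_cases h2 : f b ≠ 0
    · exact ⟨b, h2, hb⟩
    push_neg at h2
    exact ⟨a + b, by simp [h2, ha], by simp [h1, hb]⟩
  set x₀ : X := (g w)⁻¹ • w with hx₀def
  have hgx₀ : g x₀ = 1 := by
    simp [hx₀def, inv_mul_cancel₀ hgw]
  have hfx₀ : f x₀ ≠ 0 := by
    simp only [hx₀def, map_smul, smul_eq_mul]
    exact mul_ne_zero (inv_ne_zero hgw) hfw
  -- q : Y × 𝕜 → Y, q (y, t) = y - t • (T x₀).1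
  set q : (Y × 𝕜) →L[𝕜] Y :=
    ContinuousLinearMap.fst 𝕜 Y 𝕜 -
      (ContinuousLinearMap.snd 𝕜 Y 𝕜).smulRight (T x₀).1 with hqdef
  have hq : ∀ p : Y × 𝕜, q p = p.1 - p.2 • (T x₀).1 := fun p => rfl
  have hqTx₀ : q (T x₀) = 0 := by
    rw [hq]
    have : (T x₀).2 = 1 := hgx₀
    rw [this, one_smul, sub_self]
  have hqsurj : DenseRange q := by
    apply Function.Surjective.denseRange
    intro y
    exact ⟨(y, 0), by simp [hq]⟩
  have hqT : DenseRange (⇑q ∘ ⇑T) := hqsurj.comp hT q.continuous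
  refine ⟨q.comp (T.comp (LinearMap.ker f).subtypeL), ?_⟩
  have hsub : Set.range (⇑q ∘ ⇑T) ⊆
      Set.range ⇑(q.comp (T.comp (LinearMap.ker f).subtypeL)) := by
    rintro _ ⟨x, rfl⟩
    have hmem : x - (f x / f x₀) • x₀ ∈ LinearMap.ker f := by
      simp only [LinearMap.mem_ker, map_sub, map_smul, smul_eq_mul]
      field_simp
      simp
    refine ⟨⟨x - (f x / f x₀) • x₀, hmem⟩, ?_⟩
    simp only [ContinuousLinearMap.coe_comp', Function.comp_apply,
      Submodule.coe_subtypeL', Submodule.coe_subtype]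
    rw [map_sub, map_smul, map_sub, map_smul, hqTx₀, smul_zero, sub_zero]
  exact Dense.mono hsub hqT
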